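/- arXiv:2311.06464 — 3 statements merged into one kernel-verified Lean document; each statement's English description precedes it below -/
import Mathlib

section
/- For t = 0,1,2,3 let A_{a,t} ∈ ℝ^{m×n₁}, A_{b,t} ∈ ℝ^{m×n₂}, B_t ∈ ℝ^{m×d} be the components of reduced biquaternion matrices A_a, A_b, B, and let C_a = [A_{a,0}; A_{a,1}; A_{a,2}; A_{a,3}] ∈ ℝ^{4m×n₁}, C_b = [A_{b,0}; A_{b,1}; A_{b,2}; A_{b,3}] ∈ ℝ^{4m×n₂}, D = [B₀; B₁; B₂; B₃] ∈ ℝ^{4m×d} be their vertical stackings. Then a real matrix X = [X_a; X_b] ∈ ℝ^{(n₁+n₂)×d} is an RBMTLS solution — i.e., there exist real quadruples E_{b,t} ∈ ℝ^{m×n₂} and G_t ∈ ℝ^{m×d} (the components of reduced biquaternion perturbations Ê_b, Ĝ) attaining the minimum of (Σ_t ‖E_{b,t}‖_F² + Σ_t ‖G_t‖_F²)^{1/2} over all quadruples admitting a common real solution X′ = [X′_a; X′_b] of the four component equations A_{a,t} X′_a + (A_{b,t} + E_{b,t}) X′_b = B_t + G_t, and such that these four equations hold with X — if and only if X is a real MTLS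 solution, i.e., there exist Ẽ_b ∈ ℝ^{4m×n₂}, G̃ ∈ ℝ^{4m×d} attaining the minimum of ‖[Ẽ_b, G̃]‖_F subject to the existence of a real solution of C_a X′_a + (C_b + Ẽ_b) X′_b = D + G̃, and such that C_a X_a + (C_b + Ẽ_b) X_b = D + G̃. Moreover, the correspondence Ẽ_b = [E_{b,0}; E_{b,1}; E_{b,2}; E_{b,3}], G̃ = [G₀; G₁; G₂; G₃] preserves feasibility and the objective value: ‖[Ê_b, Ĝ]‖_F = ‖[Ẽ_b, G̃]‖_F. -/
open Matrix

/-- The Frobenius norm of a real matrix. -/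
noncomputable def frob {α β : Type*} [Fintype α] [Fintype β] (M : Matrix α β ℝ) : ℝ :=
  Real.sqrt (∑ i, ∑ j, M i j ^ 2)

/-- Vertical stacking `[M₀; M₁; M₂; M₃]` of the four real components of a reduced
biquaternion matrix. -/
def stack {m : ℕ} {β : Type*} (M : Fin 4 → Matrix (Fin m) β ℝ) :
    Matrix (Fin 4 × Fin m) β ℝ :=
  Matrix.of fun p j => M p.1 p.2 j

/-- The Frobenius norm `(Σ_t ‖E_t‖_F² + Σ_t ‖G_t‖_F²)^{1/2}` of the reduced biquaternion
matrix `[Ê_b, Ĝ]` with components `E_t`, `G_t`. -/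
noncomputable def objRB {m n₂ d : ℕ}
    (E : Fin 4 → Matrix (Fin m) (Fin n₂) ℝ) (G : Fin 4 → Matrix (Fin m) (Fin d) ℝ) : ℝ :=
  Real.sqrt ((∑ t, ∑ i, ∑ j, E t i j ^ 2) + (∑ t, ∑ i, ∑ j, G t i j ^ 2))

/-- Componentwise feasibility for the RBMTLS problem:
`A_{a,t} X_a + (A_{b,t} + E_t) X_b = B_t + G_t` for `t = 0,1,2,3`. -/
def feasRB {m n₁ n₂ d : ℕ}
    (Aa : Fin 4 → Matrix (Fin m) (Fin n₁) ℝ) (Ab : Fin 4 → Matrix (Fin m) (Fin n₂) ℝ)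
    (B : Fin 4 → Matrix (Fin m) (Fin d) ℝ)
    (E : Fin 4 → Matrix (Fin m) (Fin n₂) ℝ) (G : Fin 4 → Matrix (Fin m) (Fin d) ℝ)
    (Xa : Matrix (Fin n₁) (Fin d) ℝ) (Xb : Matrix (Fin n₂) (Fin d) ℝ) : Prop :=
  ∀ t, Aa t * Xa + (Ab t + E t) * Xb = B t + G t

/-- `X = [X_a; X_b]` is an RBMTLS solution: some feasible reduced biquaternion
perturbation `(E, G)` attains the minimum of the objective over all feasible data. -/
def isRBMTLSSol {m n₁ n₂ d : ℕ}
    (Aa : Fin 4 → Matrix (Fin m) (Fin n₁) ℝ) (Ab : Fin 4 → Matrix (Fin m) (Fin n₂) ℝ)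
    (B : Fin 4 → Matrix (Fin m) (Fin d) ℝ)
    (Xa : Matrix (Fin n₁) (Fin d) ℝ) (Xb : Matrix (Fin n₂) (Fin d) ℝ) : Prop :=
  ∃ E G, feasRB Aa Ab B E G Xa Xb ∧
    ∀ E' G' (Xa' : Matrix (Fin n₁) (Fin d) ℝ) (Xb' : Matrix (Fin n₂) (Fin d) ℝ),
      feasRB Aa Ab B E' G' Xa' Xb' → objRB E G ≤ objRB E' G'

/-- Feasibility for the real MTLS problem: `C_a X_a + (C_b + Ẽ_b) X_b = D + G̃`. -/
def feasMTLS {n₁ n₂ d : ℕ} {α : Type*} [Fintype α]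
    (Ca : Matrix α (Fin n₁) ℝ) (Cb : Matrix α (Fin n₂) ℝ) (D : Matrix α (Fin d) ℝ)
    (Et : Matrix α (Fin n₂) ℝ) (Gt : Matrix α (Fin d) ℝ)
    (Xa : Matrix (Fin n₁) (Fin d) ℝ) (Xb : Matrix (Fin n₂) (Fin d) ℝ) : Prop :=
  Ca * Xa + (Cb + Et) * Xb = D + Gt

/-- `X = [X_a; X_b]` is a real MTLS solution: some feasible real perturbation
`(Ẽ_b, G̃)` attains the minimum of `‖[Ẽ_b, G̃]‖_F` over all feasible data. -/
def isMTLSSol {n₁ n₂ d : ℕ} {α : Type*} [Fintype α]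
    (Ca : Matrix α (Fin n₁) ℝ) (Cb : Matrix α (Fin n₂) ℝ) (D : Matrix α (Fin d) ℝ)
    (Xa : Matrix (Fin n₁) (Fin d) ℝ) (Xb : Matrix (Fin n₂) (Fin d) ℝ) : Prop :=
  ∃ Et Gt, feasMTLS Ca Cb D Et Gt Xa Xb ∧
    ∀ Et' Gt' (Xa' : Matrix (Fin n₁) (Fin d) ℝ) (Xb' : Matrix (Fin n₂) (Fin d) ℝ),
      feasMTLS Ca Cb D Et' Gt' Xa' Xb' →
        frob (fromCols Et Gt) ≤ frob (fromCols Et' Gt')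

lemma stack_mul {m n d : ℕ} (M : Fin 4 → Matrix (Fin m) (Fin n) ℝ)
    (X : Matrix (Fin n) (Fin d) ℝ) :
    stack M * X = stack (fun t => M t * X) := by
  ext p j; simp [stack, Matrix.mul_apply]

lemma stack_add {m n : ℕ} (M N : Fin 4 → Matrix (Fin m) (Fin n) ℝ) :
    stack M + stack N = stack (fun t => M t + N t) := by
  ext p j; simp [stack]

lemma stack_inj {m n : ℕ} (M N : Fin 4 → Matrix (Fin m) (Fin n) ℝ)
    (h : stack M = stack N) : M = N := by
  funext t; ext i j
  have := congrFun (congrFun h (t, i)) j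
  simpa [stack] using this

lemma obj_eq {m n₂ d : ℕ}
    (E : Fin 4 → Matrix (Fin m) (Fin n₂) ℝ) (G : Fin 4 → Matrix (Fin m) (Fin d) ℝ) :
    objRB E G = frob (fromCols (stack E) (stack G)) := by
  unfold objRB frob
  congr 1
  rw [Fintype.sum_prod_type]
  simp [Fintype.sum_sum_type, fromCols, stack, Finset.sum_add_distrib]

lemma feas_iff {m n₁ n₂ d : ℕ}
    (Aa : Fin 4 → Matrix (Fin m) (Fin n₁) ℝ) (Ab : Fin 4 → Matrix (Fin m) (Fin n₂) ℝ)
    (B : Fin 4 → Matrix (Fin m) (Fin d) ℝ)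
    (E : Fin 4 → Matrix (Fin m) (Fin n₂) ℝ) (G : Fin 4 → Matrix (Fin m) (Fin d) ℝ)
    (Xa' : Matrix (Fin n₁) (Fin d) ℝ) (Xb' : Matrix (Fin n₂) (Fin d) ℝ) :
    feasRB Aa Ab B E G Xa' Xb' ↔
      feasMTLS (stack Aa) (stack Ab) (stack B) (stack E) (stack G) Xa' Xb' := by
  unfold feasRB feasMTLS
  rw [stack_add, stack_add, stack_mul, stack_mul]
  constructor
  · intro h
    have : (fun t => Aa t * Xa' + (Ab t + E t) * Xb') = fun t => B t + G t := funext h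
    rw [show (stack fun t => Aa t * Xa') + stack (fun t => (Ab t + E t) * Xb')
        = stack (fun t => Aa t * Xa' + (Ab t + E t) * Xb') from stack_add _ _, this]
  · intro h t
    have h2 := stack_inj _ _ ((stack_add (fun t => Aa t * Xa')
      (fun t => (Ab t + E t) * Xb')).symm.trans h)
    exact congrFun h2 t

/-- a real matrix `X = [X_a; X_b]` is an RBMTLS solution if and only if it
is a real MTLS solution for the stacked data `C_a, C_b, D`; moreover the correspondence
`Ẽ_b = [E₀; E₁; E₂; E₃]`, `G̃ = [G₀; G₁; G₂; G₃]` preserves the objective value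
(`‖[Ê_b, Ĝ]‖_F = ‖[Ẽ_b, G̃]‖_F`) and feasibility. -/
theorem rbmtls_iff_mtls {m n₁ n₂ d : ℕ}
    (Aa : Fin 4 → Matrix (Fin m) (Fin n₁) ℝ) (Ab : Fin 4 → Matrix (Fin m) (Fin n₂) ℝ)
    (B : Fin 4 → Matrix (Fin m) (Fin d) ℝ)
    (Xa : Matrix (Fin n₁) (Fin d) ℝ) (Xb : Matrix (Fin n₂) (Fin d) ℝ) :
    (isRBMTLSSol Aa Ab B Xa Xb ↔ isMTLSSol (stack Aa) (stack Ab) (stack B) Xa Xb) ∧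
    (∀ (E : Fin 4 → Matrix (Fin m) (Fin n₂) ℝ) (G : Fin 4 → Matrix (Fin m) (Fin d) ℝ),
      objRB E G = frob (fromCols (stack E) (stack G))) ∧
    (∀ (E : Fin 4 → Matrix (Fin m) (Fin n₂) ℝ) (G : Fin 4 → Matrix (Fin m) (Fin d) ℝ)
      (Xa' : Matrix (Fin n₁) (Fin d) ℝ) (Xb' : Matrix (Fin n₂) (Fin d) ℝ),
      feasRB Aa Ab B E G Xa' Xb' ↔
        feasMTLS (stack Aa) (stack Ab) (stack B) (stack E) (stack G) Xa' Xb') := by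
  refine ⟨?_, obj_eq, feas_iff Aa Ab B⟩
  constructor
  · rintro ⟨E, G, hfeas, hmin⟩
    refine ⟨stack E, stack G, (feas_iff Aa Ab B E G Xa Xb).1 hfeas, ?_⟩
    intro Et' Gt' Xa' Xb' hf
    set E' : Fin 4 → Matrix (Fin m) (Fin n₂) ℝ := fun t => Matrix.of fun i j => Et' (t, i) j
    set G' : Fin 4 → Matrix (Fin m) (Fin d) ℝ := fun t => Matrix.of fun i j => Gt' (t, i) j
    have hE' : stack E' = Et' := by ext ⟨t, i⟩ j; rfl
    have hG' : stack G' = Gt' := by ext ⟨t, i⟩ j; rfl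
    have hf' : feasRB Aa Ab B E' G' Xa' Xb' := by
      rw [feas_iff, hE', hG']; exact hf
    have := hmin E' G' Xa' Xb' hf'
    rw [obj_eq, obj_eq, hE', hG'] at this
    exact this
  · rintro ⟨Et, Gt, hfeas, hmin⟩
    set E : Fin 4 → Matrix (Fin m) (Fin n₂) ℝ := fun t => Matrix.of fun i j => Et (t, i) j
    set G : Fin 4 → Matrix (Fin m) (Fin d) ℝ := fun t => Matrix.of fun i j => Gt (t, i) j
    have hE : stack E = Et := by ext ⟨t, i⟩ j; rfl
    have hG : stack G = Gt := by ext ⟨t, i⟩ j; rfl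
    refine ⟨E, G, ?_, ?_⟩
    · rw [feas_iff, hE, hG]; exact hfeas
    · intro E' G' Xa' Xb' hf'
      rw [obj_eq, obj_eq]
      rw [feas_iff] at hf'
      have := hmin (stack E') (stack G') Xa' Xb' hf'
      rwa [hE, hG]
end

section
/- Under the hypotheses of the MTLS theorem — C_a ∈ ℝ^{M×n₁}, C_b ∈ ℝ^{M×n₂}, D ∈ ℝ^{M×d} with M ≥ n₁+n₂+d; Q orthogonal with Qᵀ[C_a, C_b, D] = [[R₁₁, R₁₂, R₁d], [0, R₂₂, R₂d]] and R₁₁ invertible; [R₂₂, R₂d] = UΣVᵀ a singular value decomposition with singular values σ₁ ≥ … ≥ σ_{n₂+d} > 0, σ_{n₂} > σ_{n₂+1}, and V₂₂ ∈ ℝ^{d×d} invertible — the minimum of ‖[Ẽ_b, G̃]‖_F over all (X, Ẽ_b, G̃) satisfying C_a X_a + (C_b + Ẽ_b) X_b = D + G̃ equals (σ_{n₂+1}² + σ_{n₂+2}² + … + σ_{n₂+d}²)^{1/2}. -/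
open Matrix

/-- `X = [X_a; X_b]` is a real MTLS solution for data `C_a, C_b, D`: there exist
perturbations `Ẽ_b, G̃` with `C_a X_a + (C_b + Ẽ_b) X_b = D + G̃` attaining the minimum
of `‖[Ẽ_b, G̃]‖_F` among all feasible triples `(X', Ẽ_b', G̃')`. -/
def IsMTLSSol {M n₁ n₂ d : ℕ}
    (Ca : Matrix (Fin M) (Fin n₁) ℝ) (Cb : Matrix (Fin M) (Fin n₂) ℝ)
    (D : Matrix (Fin M) (Fin d) ℝ) (X : Matrix (Fin n₁ ⊕ Fin n₂) (Fin d) ℝ) : Prop :=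
  ∃ (E : Matrix (Fin M) (Fin n₂) ℝ) (G : Matrix (Fin M) (Fin d) ℝ),
    fromCols Ca (Cb + E) * X = D + G ∧
    ∀ (E' : Matrix (Fin M) (Fin n₂) ℝ) (G' : Matrix (Fin M) (Fin d) ℝ)
      (X' : Matrix (Fin n₁ ⊕ Fin n₂) (Fin d) ℝ),
      fromCols Ca (Cb + E') * X' = D + G' →
        frob (fromCols E G) ≤ frob (fromCols E' G')

namespace MTLSAux

set_option linter.unusedSectionVars false

variable {α β γ : Type*} [Fintype α] [Fintype β] [Fintype γ] [DecidableEq α] [DecidableEq β]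
  [DecidableEq γ]

/-- sum of squares of entries -/
noncomputable def sq {α β : Type*} [Fintype α] [Fintype β] (A : Matrix α β ℝ) : ℝ :=
  ∑ i, ∑ j, A i j ^ 2

lemma sq_nonneg (A : Matrix α β ℝ) : 0 ≤ sq A :=
  Finset.sum_nonneg fun _ _ => Finset.sum_nonneg fun _ _ => by positivity

lemma sq_neg (A : Matrix α β ℝ) : sq (-A) = sq A := by simp [sq]

lemma sq_eq_trace (A : Matrix α β ℝ) : sq A = trace (Aᵀ * A) := by
  unfold sq Matrix.trace
  rw [Finset.sum_comm]
  congr 1; funext j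
  simp [Matrix.mul_apply, Matrix.diag, pow_two]

lemma sq_fromCols (A : Matrix α β ℝ) (B : Matrix α γ ℝ) :
    sq (fromCols A B) = sq A + sq B := by
  unfold sq
  rw [← Finset.sum_add_distrib]
  congr 1; funext i
  simp [Fintype.sum_sum_type]

lemma sq_fromRows (A : Matrix β α ℝ) (B : Matrix γ α ℝ) :
    sq (fromRows A B) = sq A + sq B := by
  unfold sq
  rw [Fintype.sum_sum_type]
  simp

lemma sq_mul_orthL {A : Matrix α γ ℝ} (hA : Aᵀ * A = 1) (B : Matrix γ β ℝ) :
    sq (A * B) = sq B := by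
  rw [sq_eq_trace, sq_eq_trace, transpose_mul, Matrix.mul_assoc, ← Matrix.mul_assoc Aᵀ, hA,
    Matrix.one_mul]

lemma sq_mul_orthR {A : Matrix γ β ℝ} (hA : A * Aᵀ = 1) (B : Matrix α γ ℝ) :
    sq (B * A) = sq B := by
  rw [sq_eq_trace, sq_eq_trace, transpose_mul, Matrix.mul_assoc,
    trace_mul_comm, Matrix.mul_assoc, Matrix.mul_assoc, hA, Matrix.mul_one, trace_mul_comm]

lemma sq_mul_proj_eq {P : Matrix β β ℝ} (hs : Pᵀ = P) (hi : P * P = P) (A : Matrix α β ℝ) :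
    sq (A * P) = trace (Aᵀ * A * P) := by
  rw [sq_eq_trace, transpose_mul, hs]
  have h : P * Aᵀ * (A * P) = P * (Aᵀ * A * P) := by simp only [Matrix.mul_assoc]
  rw [h, trace_mul_comm, Matrix.mul_assoc (Aᵀ * A) P P, hi]

lemma sq_mul_proj_le {P : Matrix β β ℝ} (hs : Pᵀ = P) (hi : P * P = P) (A : Matrix α β ℝ) :
    sq (A * P) ≤ sq A := by
  have hs' : (1 - P)ᵀ = 1 - P := by rw [transpose_sub, transpose_one, hs]
  have hi' : (1 - P) * (1 - P) = 1 - P := by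
    rw [Matrix.mul_sub, Matrix.sub_mul, Matrix.sub_mul, hi, Matrix.one_mul, Matrix.mul_one]
    simp
  have h1 := sq_mul_proj_eq hs hi A
  have h2 := sq_mul_proj_eq hs' hi' A
  have h3 : Aᵀ * A * (1 - P) = Aᵀ * A - Aᵀ * A * P := by
    rw [Matrix.mul_sub, Matrix.mul_one]
  have h4 : sq A = sq (A * P) + sq (A * (1 - P)) := by
    rw [h1, h2, h3, trace_sub, sq_eq_trace]; ring
  have := sq_nonneg (A * (1 - P))
  linarith

lemma fromRows_add (A C : Matrix β α ℝ) (B D : Matrix γ α ℝ) :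
    fromRows A B + fromRows C D = fromRows (A + C) (B + D) := by
  ext (i | i) j <;> simp

lemma fromCols_add (A C : Matrix α β ℝ) (B D : Matrix α γ ℝ) :
    fromCols A B + fromCols C D = fromCols (A + C) (B + D) := by
  ext i (j | j) <;> simp [fromCols]

end MTLSAux

set_option maxHeartbeats 1600000 in
/-- under the hypotheses of the MTLS theorem, the minimum of
`‖[Ẽ_b, G̃]‖_F` over all `(X, Ẽ_b, G̃)` with `C_a X_a + (C_b + Ẽ_b) X_b = D + G̃`
equals `(σ_{n₂+1}² + … + σ_{n₂+d}²)^{1/2}`. -/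
theorem mtls_min_value {M n₁ n₂ d : ℕ} (hn₁ : 0 < n₁) (hn₂ : 0 < n₂) (hd : 0 < d)
    (hM : n₁ + n₂ + d ≤ M)
    (Ca : Matrix (Fin M) (Fin n₁) ℝ) (Cb : Matrix (Fin M) (Fin n₂) ℝ)
    (D : Matrix (Fin M) (Fin d) ℝ)
    (Q : Matrix (Fin M) (Fin n₁ ⊕ Fin (M - n₁)) ℝ)
    (hQ : Qᵀ * Q = 1) (hQ' : Q * Qᵀ = 1)
    (R₁₁ : Matrix (Fin n₁) (Fin n₁) ℝ) (R₁₂ : Matrix (Fin n₁) (Fin n₂) ℝ)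
    (R₁d : Matrix (Fin n₁) (Fin d) ℝ)
    (R₂₂ : Matrix (Fin (M - n₁)) (Fin n₂) ℝ) (R₂d : Matrix (Fin (M - n₁)) (Fin d) ℝ)
    (hR₁₁ : IsUnit R₁₁.det)
    (hQR : Qᵀ * fromCols (fromCols Ca Cb) D =
      fromBlocks (fromCols R₁₁ R₁₂) R₁d (fromCols 0 R₂₂) R₂d)
    (U : Matrix (Fin (M - n₁)) (Fin (M - n₁)) ℝ) (hU : Uᵀ * U = 1)
    (V₁₁ : Matrix (Fin n₂) (Fin n₂) ℝ) (V₁₂ : Matrix (Fin n₂) (Fin d) ℝ)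
    (V₂₁ : Matrix (Fin d) (Fin n₂) ℝ) (V₂₂ : Matrix (Fin d) (Fin d) ℝ)
    (hV : (fromBlocks V₁₁ V₁₂ V₂₁ V₂₂)ᵀ * fromBlocks V₁₁ V₁₂ V₂₁ V₂₂ = 1)
    (σ : Fin (n₂ + d) → ℝ) (hσpos : ∀ i, 0 < σ i) (hσdec : Antitone σ)
    (hSVD : fromCols R₂₂ R₂d =
      U * (Matrix.of fun (i : Fin (M - n₁)) (j : Fin n₂ ⊕ Fin d) =>
            if (i : ℕ) = ((finSumFinEquiv j : Fin (n₂ + d)) : ℕ)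
            then σ (finSumFinEquiv j) else 0) *
        (fromBlocks V₁₁ V₁₂ V₂₁ V₂₂)ᵀ)
    (hgap : σ ⟨n₂, by omega⟩ < σ ⟨n₂ - 1, by omega⟩)
    (hV₂₂ : IsUnit V₂₂.det) :
    IsLeast
      {r : ℝ | ∃ (X : Matrix (Fin n₁ ⊕ Fin n₂) (Fin d) ℝ)
        (E : Matrix (Fin M) (Fin n₂) ℝ) (G : Matrix (Fin M) (Fin d) ℝ),
        fromCols Ca (Cb + E) * X = D + G ∧ r = frob (fromCols E G)}
      (Real.sqrt (∑ i ∈ Finset.univ.filter (fun i : Fin (n₂ + d) => n₂ ≤ (i : ℕ)),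
        σ i ^ 2)) := by
  classical
  set V : Matrix (Fin n₂ ⊕ Fin d) (Fin n₂ ⊕ Fin d) ℝ := fromBlocks V₁₁ V₁₂ V₂₁ V₂₂ with hVdef
  set S : Matrix (Fin (M - n₁)) (Fin n₂ ⊕ Fin d) ℝ :=
    Matrix.of fun (i : Fin (M - n₁)) (j : Fin n₂ ⊕ Fin d) =>
      if (i : ℕ) = ((finSumFinEquiv j : Fin (n₂ + d)) : ℕ)
      then σ (finSumFinEquiv j) else 0 with hSdef
  set A : Matrix (Fin (M - n₁)) (Fin n₂ ⊕ Fin d) ℝ := fromCols R₂₂ R₂d with hAdef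
  set f : Fin n₂ ⊕ Fin d → ℝ := fun j => σ (finSumFinEquiv j) ^ 2 with hfdef
  have hMd : n₂ + d ≤ M - n₁ := by omega
  have hSapp : ∀ i j, S i j =
      if (i : ℕ) = ((finSumFinEquiv j : Fin (n₂ + d)) : ℕ)
      then σ (finSumFinEquiv j) else 0 := fun i j => rfl
  have hlt : ∀ j : Fin n₂ ⊕ Fin d, ((finSumFinEquiv j : Fin (n₂ + d)) : ℕ) < M - n₁ :=
    fun j => lt_of_lt_of_le (Fin.is_lt _) hMd
  have hV' : V * Vᵀ = 1 := mul_eq_one_comm.mp hV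
  -- SᵀS is diagonal
  have hStS : Sᵀ * S = Matrix.diagonal f := by
    ext j k
    rw [Matrix.mul_apply, Matrix.diagonal_apply]
    by_cases hjk : j = k
    · subst hjk
      rw [if_pos rfl]
      rw [Finset.sum_eq_single (⟨((finSumFinEquiv j : Fin (n₂ + d)) : ℕ), hlt j⟩ : Fin (M - n₁))]
      · simp [transpose_apply, hSapp, hfdef, pow_two]
      · intro i _ hne
        have h : ¬ ((i : ℕ) = ((finSumFinEquiv j : Fin (n₂ + d)) : ℕ)) := by
          intro h; exact hne (Fin.ext h)
        simp [transpose_apply, hSapp, h]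
      · intro h; exact absurd (Finset.mem_univ _) h
    · rw [if_neg hjk]
      apply Finset.sum_eq_zero
      intro i _
      rcases eq_or_ne ((i : ℕ)) (((finSumFinEquiv j : Fin (n₂ + d)) : ℕ)) with h1 | h1
      · have h2 : ¬ ((i : ℕ) = ((finSumFinEquiv k : Fin (n₂ + d)) : ℕ)) := by
          intro h2
          exact hjk (finSumFinEquiv.injective (Fin.ext (h1.symm.trans h2)))
        simp [transpose_apply, hSapp, h2]
      · simp [transpose_apply, hSapp, h1]
  -- AᵀA = V (diagonal f) Vᵀ
  have hAt : Aᵀ = V * Sᵀ * Uᵀ := by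
    rw [hSVD]; simp only [transpose_mul, transpose_transpose, Matrix.mul_assoc]
  have hAtA : Aᵀ * A = V * Matrix.diagonal f * Vᵀ := by
    rw [hAt, hSVD]
    calc V * Sᵀ * Uᵀ * (U * S * Vᵀ) = V * (Sᵀ * ((Uᵀ * U) * (S * Vᵀ))) := by
          simp only [Matrix.mul_assoc]
      _ = V * (Sᵀ * (S * Vᵀ)) := by rw [hU, Matrix.one_mul]
      _ = V * Matrix.diagonal f * Vᵀ := by
          rw [← Matrix.mul_assoc Sᵀ S, hStS, Matrix.mul_assoc]
  -- the target value
  have hT : (∑ i ∈ Finset.univ.filter (fun i : Fin (n₂ + d) => n₂ ≤ (i : ℕ)), σ i ^ 2)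
      = ∑ k : Fin d, f (Sum.inr k) := by
    rw [Finset.sum_filter,
      ← Equiv.sum_comp finSumFinEquiv (fun i : Fin (n₂ + d) => if n₂ ≤ (i : ℕ) then σ i ^ 2 else 0),
      Fintype.sum_sum_type]
    have h1 : ∀ a : Fin n₂,
        (if n₂ ≤ ((finSumFinEquiv (Sum.inl a) : Fin (n₂ + d)) : ℕ)
          then σ (finSumFinEquiv (Sum.inl a)) ^ 2 else 0) = 0 := by
      intro a
      have hco : ((finSumFinEquiv (Sum.inl a) : Fin (n₂ + d)) : ℕ) = (a : ℕ) := by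
        simp [finSumFinEquiv_apply_left]
      rw [hco, if_neg (by omega : ¬ n₂ ≤ (a : ℕ))]
    have h2 : ∀ k : Fin d,
        (if n₂ ≤ ((finSumFinEquiv (Sum.inr k) : Fin (n₂ + d)) : ℕ)
          then σ (finSumFinEquiv (Sum.inr k)) ^ 2 else 0) = f (Sum.inr k) := by
      intro k
      have hco : ((finSumFinEquiv (Sum.inr k) : Fin (n₂ + d)) : ℕ) = n₂ + (k : ℕ) := by
        simp [finSumFinEquiv_apply_right]
      rw [hco, if_pos (by omega : n₂ ≤ n₂ + (k : ℕ))]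
    rw [Finset.sum_congr rfl (fun a _ => h1 a), Finset.sum_congr rfl (fun k _ => h2 k)]
    simp
  -- extraction of the block identities
  have hsplit := hQR
  rw [Matrix.mul_fromCols, Matrix.mul_fromCols,
    ← fromCols_fromRows_eq_fromBlocks] at hsplit
  obtain ⟨hCaCb, hD⟩ := fromCols_inj hsplit
  rw [fromRows_fromCols_eq_fromBlocks, ← fromCols_fromRows_eq_fromBlocks] at hCaCb
  obtain ⟨hCa, hCb⟩ := fromCols_inj hCaCb
  constructor
  · -- membership: exhibit the optimal perturbation
    set g : Fin n₂ ⊕ Fin d → ℝ := Sum.elim (fun _ => (0 : ℝ)) (fun _ => (1 : ℝ)) with hgdef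
    set Δs : Matrix (Fin (M - n₁)) (Fin n₂ ⊕ Fin d) ℝ := -(U * (S * Matrix.diagonal g) * Vᵀ)
      with hΔsdef
    set Xb : Matrix (Fin n₂) (Fin d) ℝ := -(V₁₂ * V₂₂⁻¹) with hXbdef
    set Xa : Matrix (Fin n₁) (Fin d) ℝ := R₁₁⁻¹ * (R₁d - R₁₂ * Xb) with hXadef
    set E₂ : Matrix (Fin (M - n₁)) (Fin n₂) ℝ := Δs.toCols₁ with hE2def
    set G₂ : Matrix (Fin (M - n₁)) (Fin d) ℝ := Δs.toCols₂ with hG2def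
    refine ⟨fromRows Xa Xb, Q * fromRows (0 : Matrix (Fin n₁) (Fin n₂) ℝ) E₂,
      Q * fromRows (0 : Matrix (Fin n₁) (Fin d) ℝ) G₂, ?_, ?_⟩
    · -- feasibility
      have hA2 : A + Δs = U * (S * (1 - Matrix.diagonal g)) * Vᵀ := by
        rw [hSVD, hΔsdef]
        simp only [Matrix.mul_sub, Matrix.sub_mul, Matrix.mul_one, Matrix.mul_assoc]
        abel
      have hgJ : (1 - Matrix.diagonal g)
          * fromRows (0 : Matrix (Fin n₂) (Fin d) ℝ) (1 : Matrix (Fin d) (Fin d) ℝ) = 0 := by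
        have hdg : (1 : Matrix (Fin n₂ ⊕ Fin d) (Fin n₂ ⊕ Fin d) ℝ) - Matrix.diagonal g
            = Matrix.diagonal (fun j => 1 - g j) := by
          rw [← Matrix.diagonal_one, Matrix.diagonal_sub]
        ext i j
        rw [hdg, Matrix.diagonal_mul]
        cases i with
        | inl a => simp
        | inr b => simp [hgdef]
      have h0 : (A + Δs) * (V * fromRows (0 : Matrix (Fin n₂) (Fin d) ℝ) (1 : Matrix (Fin d) (Fin d) ℝ)) = 0 := by
        rw [hA2, show U * (S * (1 - Matrix.diagonal g)) * Vᵀ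
              * (V * fromRows (0 : Matrix (Fin n₂) (Fin d) ℝ) (1 : Matrix (Fin d) (Fin d) ℝ))
            = U * (S * ((1 - Matrix.diagonal g)
              * ((Vᵀ * V) * fromRows (0 : Matrix (Fin n₂) (Fin d) ℝ) (1 : Matrix (Fin d) (Fin d) ℝ)))) by
          simp only [Matrix.mul_assoc], hV, Matrix.one_mul, hgJ, Matrix.mul_zero,
          Matrix.mul_zero]
      have hVJ : V * fromRows (0 : Matrix (Fin n₂) (Fin d) ℝ) (1 : Matrix (Fin d) (Fin d) ℝ) = fromRows V₁₂ V₂₂ := by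
        rw [hVdef, fromBlocks_mul_fromRows]
        simp
      have hNs : fromRows Xb (-1 : Matrix (Fin d) (Fin d) ℝ)
          = -(fromRows V₁₂ V₂₂ * V₂₂⁻¹) := by
        rw [fromRows_mul, Matrix.mul_nonsing_inv _ hV₂₂, hXbdef]
        ext (i | i) j <;> simp [Matrix.neg_apply]
      have h1 : (A + Δs) * fromRows Xb (-1 : Matrix (Fin d) (Fin d) ℝ) = 0 := by
        rw [hNs, ← hVJ, Matrix.mul_neg,
          show (A + Δs) * (V * fromRows (0 : Matrix (Fin n₂) (Fin d) ℝ) (1 : Matrix (Fin d) (Fin d) ℝ) * V₂₂⁻¹)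
            = ((A + Δs) * (V * fromRows (0 : Matrix (Fin n₂) (Fin d) ℝ) (1 : Matrix (Fin d) (Fin d) ℝ))) * V₂₂⁻¹ by
          simp only [Matrix.mul_assoc], h0, Matrix.zero_mul, neg_zero]
      have hADcols : A + Δs = fromCols (R₂₂ + E₂) (R₂d + G₂) := by
        rw [hAdef, show Δs = fromCols E₂ G₂ from (fromCols_toCols Δs).symm,
          MTLSAux.fromCols_add]
      have hbots : (R₂₂ + E₂) * Xb = R₂d + G₂ := by
        rw [hADcols, fromCols_mul_fromRows] at h1
        have h2 : (R₂₂ + E₂) * Xb - (R₂d + G₂) = 0 := by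
          rw [← h1]
          simp [Matrix.mul_neg, Matrix.mul_one, sub_eq_add_neg]
        exact sub_eq_zero.mp h2
      have hcan : ∀ {Y Z : Matrix (Fin M) (Fin d) ℝ}, Qᵀ * Y = Qᵀ * Z → Y = Z := by
        intro Y Z hyz
        have h2 := congrArg (fun W => Q * W) hyz
        simpa only [← Matrix.mul_assoc, hQ', Matrix.one_mul] using h2
      apply hcan
      rw [fromCols_mul_fromRows]
      simp only [Matrix.mul_add, Matrix.add_mul, ← Matrix.mul_assoc]
      rw [hQ, hCa, hCb, hD, Matrix.one_mul, Matrix.one_mul]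
      simp only [fromRows_mul, MTLSAux.fromRows_add, Matrix.zero_mul, zero_add, add_zero]
      rw [fromRows_ext_iff]
      constructor
      · rw [hXadef, ← Matrix.mul_assoc, Matrix.mul_nonsing_inv _ hR₁₁, Matrix.one_mul]
        abel
      · rw [← Matrix.add_mul]
        exact hbots
    · -- the attained value
      have hVt : Vᵀ * Vᵀᵀ = 1 := by rw [transpose_transpose]; exact hV
      have hv1 : MTLSAux.sq (Q * fromRows (0 : Matrix (Fin n₁) (Fin n₂) ℝ) E₂)
          = MTLSAux.sq E₂ := by
        rw [MTLSAux.sq_mul_orthL hQ, MTLSAux.sq_fromRows]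
        simp [MTLSAux.sq]
      have hv2 : MTLSAux.sq (Q * fromRows (0 : Matrix (Fin n₁) (Fin d) ℝ) G₂)
          = MTLSAux.sq G₂ := by
        rw [MTLSAux.sq_mul_orthL hQ, MTLSAux.sq_fromRows]
        simp [MTLSAux.sq]
      have hΔssq : MTLSAux.sq Δs = MTLSAux.sq E₂ + MTLSAux.sq G₂ := by
        rw [show Δs = fromCols E₂ G₂ from (fromCols_toCols Δs).symm,
          MTLSAux.sq_fromCols]
      have hsqval : MTLSAux.sq Δs = ∑ k : Fin d, f (Sum.inr k) := by
        rw [hΔsdef, MTLSAux.sq_neg, MTLSAux.sq_mul_orthR hVt, MTLSAux.sq_mul_orthL hU]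
        rw [MTLSAux.sq_eq_trace, transpose_mul, Matrix.diagonal_transpose,
          show Matrix.diagonal g * Sᵀ * (S * Matrix.diagonal g)
            = Matrix.diagonal g * ((Sᵀ * S) * Matrix.diagonal g) by
          simp only [Matrix.mul_assoc], hStS, Matrix.diagonal_mul_diagonal,
          Matrix.diagonal_mul_diagonal, Matrix.trace_diagonal]
        rw [Fintype.sum_sum_type]
        simp [hgdef]
      rw [hT, show frob (fromCols (Q * fromRows (0 : Matrix (Fin n₁) (Fin n₂) ℝ) E₂)
            (Q * fromRows (0 : Matrix (Fin n₁) (Fin d) ℝ) G₂))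
          = Real.sqrt (MTLSAux.sq (fromCols (Q * fromRows (0 : Matrix (Fin n₁) (Fin n₂) ℝ) E₂)
            (Q * fromRows (0 : Matrix (Fin n₁) (Fin d) ℝ) G₂))) from rfl,
        MTLSAux.sq_fromCols, hv1, hv2, ← hΔssq, hsqval]
  · -- lower bound
    rintro r ⟨X, E, G, hEq, rfl⟩
    have hrows : ∀ (Y : Matrix (Fin M) (Fin d) ℝ), True := fun _ => trivial
    -- reduce the constraint with Qᵀ
    have h := congrArg (fun W => Qᵀ * W) hEq
    beta_reduce at h
    rw [← fromRows_toRows X, fromCols_mul_fromRows] at h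
    simp only [Matrix.mul_add, Matrix.add_mul, ← Matrix.mul_assoc] at h
    rw [hCa, hCb, hD] at h
    rw [← fromRows_toRows (Qᵀ * E), ← fromRows_toRows (Qᵀ * G)] at h
    set Xb := X.toRows₂ with hXbdef
    set E₂ := (Qᵀ * E).toRows₂ with hE2def
    set G₂ := (Qᵀ * G).toRows₂ with hG2def
    set E₁ := (Qᵀ * E).toRows₁ with hE1def
    set G₁ := (Qᵀ * G).toRows₁ with hG1def
    simp only [fromRows_mul, MTLSAux.fromRows_add] at h
    have hbot := (fromRows_inj h).2
    rw [Matrix.zero_mul, zero_add] at hbot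
    -- hbot : R₂₂ * Xb + E₂ * Xb = R₂d + G₂
    set Δ : Matrix (Fin (M - n₁)) (Fin n₂ ⊕ Fin d) ℝ := fromCols E₂ G₂ with hΔdef
    set N : Matrix (Fin n₂ ⊕ Fin d) (Fin d) ℝ := fromRows Xb (-1) with hNdef
    have hADcols : A + Δ = fromCols (R₂₂ + E₂) (R₂d + G₂) := by
      rw [hAdef, hΔdef, MTLSAux.fromCols_add]
    have hBN : (A + Δ) * N = 0 := by
      rw [hADcols, hNdef, fromCols_mul_fromRows, Matrix.mul_neg, Matrix.mul_one,
        Matrix.add_mul, hbot]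
      abel
    set K : Matrix (Fin d) (Fin d) ℝ := Nᵀ * N with hKdef
    have hKval : K = Xbᵀ * Xb + 1 := by
      rw [hKdef, hNdef, transpose_fromRows, fromCols_mul_fromRows]
      simp
    have hKpos : K.PosDef := by
      rw [hKval]
      refine Matrix.PosDef.posSemidef_add ?_ Matrix.PosDef.one
      have := Matrix.posSemidef_conjTranspose_mul_self Xb
      rwa [conjTranspose_eq_transpose_of_trivial] at this
    have hKdet : IsUnit K.det := hKpos.det_pos.ne'.isUnit
    have hKsymm : Kᵀ = K := by rw [hKdef, transpose_mul, transpose_transpose]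
    clear_value K
    set P : Matrix (Fin n₂ ⊕ Fin d) (Fin n₂ ⊕ Fin d) ℝ := N * K⁻¹ * Nᵀ with hPdef
    clear_value P
    have hPs : Pᵀ = P := by
      rw [hPdef]
      simp only [transpose_mul, transpose_transpose, Matrix.transpose_nonsing_inv, hKsymm,
        Matrix.mul_assoc]
    have hPP : P * P = P := by
      rw [hPdef]
      have h1 : N * K⁻¹ * Nᵀ * (N * K⁻¹ * Nᵀ) = N * (K⁻¹ * (Nᵀ * N) * (K⁻¹ * Nᵀ)) := by
        simp only [Matrix.mul_assoc]
      rw [h1, ← hKdef, Matrix.nonsing_inv_mul K hKdet, Matrix.one_mul, ← Matrix.mul_assoc]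
    have hBP : (A + Δ) * P = 0 := by
      rw [hPdef, show (A + Δ) * (N * K⁻¹ * Nᵀ) = ((A + Δ) * N) * (K⁻¹ * Nᵀ) by
        simp only [Matrix.mul_assoc], hBN, Matrix.zero_mul]
    have hΔP : Δ * P = -(A * P) := by
      have h2 : A * P + Δ * P = 0 := by rw [← Matrix.add_mul, hBP]
      exact eq_neg_of_add_eq_zero_right h2
    set P' : Matrix (Fin n₂ ⊕ Fin d) (Fin n₂ ⊕ Fin d) ℝ := Vᵀ * P * V with hP'def
    clear_value P'
    have hP's : P'ᵀ = P' := by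
      rw [hP'def]
      simp only [transpose_mul, transpose_transpose, hPs, Matrix.mul_assoc]
    have hP'P : P' * P' = P' := by
      rw [hP'def]
      have h1 : Vᵀ * P * V * (Vᵀ * P * V) = Vᵀ * (P * (V * Vᵀ) * (P * V)) := by
        simp only [Matrix.mul_assoc]
      rw [h1, hV', Matrix.mul_one, ← Matrix.mul_assoc P P, hPP]
      exact (Matrix.mul_assoc Vᵀ P V).symm
    have htrP : trace P' = (d : ℝ) := by
      rw [hP'def, trace_mul_cycle, hV', Matrix.one_mul, hPdef, trace_mul_cycle, ← hKdef,
        Matrix.mul_nonsing_inv K hKdet, trace_one]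
      simp
    have hdiag : ∀ j, 0 ≤ P' j j ∧ P' j j ≤ 1 := by
      intro j
      have hsymm : ∀ k, P' k j = P' j k := fun k => congrFun (congrFun hP's j) k
      have h := congrFun (congrFun hP'P j) j
      rw [Matrix.mul_apply] at h
      have hsum : P' j j = ∑ k, (P' j k) ^ 2 := by
        rw [← h]
        exact Finset.sum_congr rfl fun k _ => by rw [hsymm k]; ring
      have h0 : 0 ≤ P' j j := by rw [hsum]; positivity
      have h1 : (P' j j) ^ 2 ≤ P' j j := by
        calc (P' j j) ^ 2 ≤ ∑ k, (P' j k) ^ 2 :=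
              Finset.single_le_sum (f := fun k => (P' j k) ^ 2)
                (fun k _ => sq_nonneg (P' j k)) (Finset.mem_univ j)
          _ = P' j j := hsum.symm
      refine ⟨h0, ?_⟩
      rcases h0.eq_or_lt with h0' | h0'
      · rw [← h0']; exact zero_le_one
      · rw [pow_two] at h1
        exact le_of_mul_le_mul_left (by rw [mul_one]; exact h1) h0'
    have hsumdiag : ∑ j, P' j j = (d : ℝ) := htrP
    -- main trace computation
    have hstep2 : MTLSAux.sq (Δ * P) = trace (Matrix.diagonal f * P') := by
      rw [hΔP, MTLSAux.sq_neg, MTLSAux.sq_mul_proj_eq hPs hPP, hAtA]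
      rw [show V * Matrix.diagonal f * Vᵀ * P = V * (Matrix.diagonal f * (Vᵀ * P)) by
        simp only [Matrix.mul_assoc]]
      rw [trace_mul_comm, hP'def]
      simp only [Matrix.mul_assoc]
    have hstep3 : trace (Matrix.diagonal f * P') = ∑ j, f j * P' j j := by
      simp [Matrix.trace, Matrix.diag, Matrix.diagonal_mul]
    -- elementary inequality
    have hfnn : ∀ j, 0 ≤ f j := fun j => by rw [hfdef]; positivity
    set c : ℝ := σ ⟨n₂, by omega⟩ ^ 2 with hcdef
    have hfl : ∀ a : Fin n₂, c ≤ f (Sum.inl a) := by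
      intro a
      have hle : σ (⟨n₂, by omega⟩ : Fin (n₂ + d)) ≤ σ (finSumFinEquiv (Sum.inl a)) := by
        apply hσdec
        rw [Fin.le_def]
        simp [finSumFinEquiv_apply_left]
      rw [hcdef, hfdef]
      exact pow_le_pow_left₀ (le_of_lt (hσpos _)) hle 2
    have hfr : ∀ k : Fin d, f (Sum.inr k) ≤ c := by
      intro k
      have hle : σ (finSumFinEquiv (Sum.inr k)) ≤ σ (⟨n₂, by omega⟩ : Fin (n₂ + d)) := by
        apply hσdec
        rw [Fin.le_def]
        simp [finSumFinEquiv_apply_right]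
      rw [hcdef, hfdef]
      exact pow_le_pow_left₀ (le_of_lt (hσpos _)) hle 2
    have hstep4 : (∑ k : Fin d, f (Sum.inr k)) ≤ ∑ j, f j * P' j j := by
      rw [Fintype.sum_sum_type (fun j => f j * P' j j)]
      have hI1 : ∑ a : Fin n₂, c * P' (Sum.inl a) (Sum.inl a)
          ≤ ∑ a : Fin n₂, f (Sum.inl a) * P' (Sum.inl a) (Sum.inl a) :=
        Finset.sum_le_sum fun a _ =>
          mul_le_mul_of_nonneg_right (hfl a) (hdiag (Sum.inl a)).1
      have hI2 : ∑ k : Fin d, (f (Sum.inr k) + (c * P' (Sum.inr k) (Sum.inr k) - c))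
          ≤ ∑ k : Fin d, f (Sum.inr k) * P' (Sum.inr k) (Sum.inr k) :=
        Finset.sum_le_sum fun k _ => by
          nlinarith [(hdiag (Sum.inr k)).1, (hdiag (Sum.inr k)).2, hfr k, hfnn (Sum.inr k)]
      have hexp : ∑ k : Fin d, (f (Sum.inr k) + (c * P' (Sum.inr k) (Sum.inr k) - c))
          = (∑ k : Fin d, f (Sum.inr k))
            + c * (∑ k : Fin d, P' (Sum.inr k) (Sum.inr k)) - (d : ℝ) * c := by
        rw [Finset.sum_add_distrib, Finset.sum_sub_distrib, ← Finset.mul_sum]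
        simp [Finset.sum_const, Finset.card_univ, mul_comm]
        ring
      have hexp1 : ∑ a : Fin n₂, c * P' (Sum.inl a) (Sum.inl a)
          = c * ∑ a : Fin n₂, P' (Sum.inl a) (Sum.inl a) := by rw [Finset.mul_sum]
      have hsum2 : (∑ a : Fin n₂, P' (Sum.inl a) (Sum.inl a))
          + ∑ k : Fin d, P' (Sum.inr k) (Sum.inr k) = (d : ℝ) := by
        rw [← Fintype.sum_sum_type (fun j => P' j j)]
        exact hsumdiag
      have hc1 : c * (∑ a : Fin n₂, P' (Sum.inl a) (Sum.inl a))
          + c * (∑ k : Fin d, P' (Sum.inr k) (Sum.inr k)) = c * (d : ℝ) := by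
        rw [← mul_add, hsum2]
      linarith [hI1, hI2]
    have hkey : (∑ k : Fin d, f (Sum.inr k)) ≤ MTLSAux.sq Δ := by
      have := MTLSAux.sq_mul_proj_le hPs hPP Δ
      rw [hstep2, hstep3] at this
      linarith [hstep4]
    -- conclude
    have hQt : Qᵀᵀ * Qᵀ = 1 := by rw [transpose_transpose]; exact hQ'
    have hEsq : MTLSAux.sq E = MTLSAux.sq E₁ + MTLSAux.sq E₂ := by
      rw [← MTLSAux.sq_mul_orthL hQt E, ← fromRows_toRows (Qᵀ * E), MTLSAux.sq_fromRows]
    have hGsq : MTLSAux.sq G = MTLSAux.sq G₁ + MTLSAux.sq G₂ := by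
      rw [← MTLSAux.sq_mul_orthL hQt G, ← fromRows_toRows (Qᵀ * G), MTLSAux.sq_fromRows]
    have hΔsq : MTLSAux.sq Δ = MTLSAux.sq E₂ + MTLSAux.sq G₂ := by
      rw [hΔdef, MTLSAux.sq_fromCols]
    have hfrob : frob (fromCols E G) = Real.sqrt (MTLSAux.sq E + MTLSAux.sq G) := by
      rw [show frob (fromCols E G) = Real.sqrt (MTLSAux.sq (fromCols E G)) from rfl,
        MTLSAux.sq_fromCols]
    rw [hT, hfrob]
    apply Real.sqrt_le_sqrt
    have h1 := MTLSAux.sq_nonneg E₁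
    have h2 := MTLSAux.sq_nonneg G₁
    linarith
end

section
/- Let M, n, d be positive integers with M ≥ n + d, and let C ∈ ℝ^{M×n}, D ∈ ℝ^{M×d}. Let [C, D] = UΣVᵀ be a singular value decomposition with U ∈ ℝ^{M×M} and V ∈ ℝ^{(n+d)×(n+d)} orthogonal and singular values σ₁ ≥ … ≥ σ_{n+d} > 0. Partition V = [[V₁₁, V₁₂], [V₂₁, V₂₂]] with V₁₁ ∈ ℝ^{n×n}, V₁₂ ∈ ℝ^{n×d}, V₂₁ ∈ ℝ^{d×n}, V₂₂ ∈ ℝ^{d×d}. If σ_n > σ_{n+1} and V₂₂ is invertible, then the real TLS solution exists, is unique, and is given by X = −V₁₂V₂₂⁻¹. -/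
open Matrix

/-- `X` is a real TLS solution for data `C, D`: there exist perturbations `Ẽ, G̃` with
`(C + Ẽ) X = D + G̃` attaining the minimum of `‖[Ẽ, G̃]‖_F` among all feasible triples
`(X', Ẽ', G̃')`. -/
def IsTLSSol {M n d : ℕ}
    (C : Matrix (Fin M) (Fin n) ℝ) (D : Matrix (Fin M) (Fin d) ℝ)
    (X : Matrix (Fin n) (Fin d) ℝ) : Prop :=
  ∃ (E : Matrix (Fin M) (Fin n) ℝ) (G : Matrix (Fin M) (Fin d) ℝ),
    (C + E) * X = D + G ∧
    ∀ (E' : Matrix (Fin M) (Fin n) ℝ) (G' : Matrix (Fin M) (Fin d) ℝ)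
      (X' : Matrix (Fin n) (Fin d) ℝ),
      (C + E') * X' = D + G' → frob (fromCols E G) ≤ frob (fromCols E' G')

def frobSq {α β : Type*} [Fintype α] [Fintype β] (A : Matrix α β ℝ) : ℝ :=
  ∑ i, ∑ j, A i j ^ 2

lemma frobSq_nonneg {α β : Type*} [Fintype α] [Fintype β] (A : Matrix α β ℝ) :
    0 ≤ frobSq A :=
  Finset.sum_nonneg fun _ _ => Finset.sum_nonneg fun _ _ => sq_nonneg _

lemma frobSq_eq_trace {α β : Type*} [Fintype α] [Fintype β] [DecidableEq β] (A : Matrix α β ℝ) :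
    frobSq A = Matrix.trace (Aᵀ * A) := by
  unfold frobSq Matrix.trace
  rw [Finset.sum_comm]
  simp [Matrix.mul_apply, Matrix.diag, sq]

lemma frobSq_neg {α β : Type*} [Fintype α] [Fintype β] (A : Matrix α β ℝ) :
    frobSq (-A) = frobSq A := by
  unfold frobSq; simp

lemma trace_proj {α β : Type*} [Fintype α] [Fintype β] [DecidableEq β]
    (Δ : Matrix α β ℝ) (P : Matrix β β ℝ) (hPsym : Pᵀ = P) (hPidem : P * P = P) :
    Matrix.trace (Δᵀ * Δ * P) = frobSq (Δ * P) := by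
  rw [frobSq_eq_trace, Matrix.transpose_mul, hPsym]
  calc Matrix.trace (Δᵀ * Δ * P)
      = Matrix.trace (Δᵀ * (Δ * P)) := by rw [Matrix.mul_assoc]
    _ = Matrix.trace ((Δ * P) * Δᵀ) := by rw [Matrix.trace_mul_comm]
    _ = Matrix.trace ((Δ * (P * P)) * Δᵀ) := by rw [hPidem]
    _ = Matrix.trace ((Δ * P) * (P * Δᵀ)) := by simp only [Matrix.mul_assoc]
    _ = Matrix.trace ((P * Δᵀ) * (Δ * P)) := by rw [Matrix.trace_mul_comm]
    _ = Matrix.trace (P * Δᵀ * (Δ * P)) := rfl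

lemma symIdem_diag_eq {ι : Type*} [Fintype ι] (Q : Matrix ι ι ℝ) (hsym : Qᵀ = Q)
    (hidem : Q * Q = Q) (k : ι) : Q k k = ∑ l, Q k l ^ 2 := by
  conv_lhs => rw [← hidem]
  rw [Matrix.mul_apply]
  refine Finset.sum_congr rfl fun l _ => ?_
  have hlk : Q l k = Q k l := by
    calc Q l k = Qᵀ k l := rfl
      _ = Q k l := by rw [hsym]
  rw [hlk, sq]

lemma Vdiag_eq {n d : ℕ} (V : Matrix (Fin n ⊕ Fin d) (Fin n ⊕ Fin d) ℝ) :
    V * Matrix.diagonal (Sum.elim (fun _ => (0:ℝ)) (fun _ => 1)) * Vᵀ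
      = (V.submatrix id Sum.inr) * (V.submatrix id Sum.inr)ᵀ := by
  ext i l
  simp [Matrix.mul_apply, Matrix.diagonal_apply, Fintype.sum_sum_type,
    Finset.mul_sum, Finset.sum_mul, mul_ite, ite_mul, mul_zero, zero_mul, mul_one]

lemma isUnit_det_aux {n d : ℕ} (X : Matrix (Fin n) (Fin d) ℝ) :
    IsUnit (Xᵀ * X + 1).det := by
  rw [← Matrix.isUnit_iff_isUnit_det, ← Matrix.mulVec_injective_iff_isUnit]
  intro v w h
  have h0 : (Xᵀ * X + 1) *ᵥ (v - w) = 0 := by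
    rw [Matrix.mulVec_sub, h, sub_self]
  have h1 : (v - w) ⬝ᵥ ((Xᵀ * X + 1) *ᵥ (v - w)) = 0 := by rw [h0, dotProduct_zero]
  rw [Matrix.add_mulVec, dotProduct_add, Matrix.one_mulVec, ← Matrix.mulVec_mulVec,
    Matrix.dotProduct_mulVec, Matrix.vecMul_transpose] at h1
  have hsn : ∀ (u : Fin d → ℝ), 0 ≤ u ⬝ᵥ u := fun u =>
    Finset.sum_nonneg fun i _ => mul_self_nonneg _
  have hsn' : ∀ (u : Fin n → ℝ), 0 ≤ u ⬝ᵥ u := fun u =>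
    Finset.sum_nonneg fun i _ => mul_self_nonneg _
  have h2 := hsn' (X *ᵥ (v - w))
  have h3 : (v - w) ⬝ᵥ (v - w) = 0 := by
    have h4 := hsn (v - w)
    linarith
  exact sub_eq_zero.mp (dotProduct_self_eq_zero.mp h3)

lemma tls_key {M n d : ℕ}
    (A : Matrix (Fin M) (Fin n ⊕ Fin d) ℝ)
    (V : Matrix (Fin n ⊕ Fin d) (Fin n ⊕ Fin d) ℝ) (hV : Vᵀ * V = 1)
    (f : Fin n ⊕ Fin d → ℝ)
    (hA : Aᵀ * A = V * Matrix.diagonal f * Vᵀ)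
    (a b : ℝ) (hab : b < a)
    (hfl : ∀ i, a ≤ f (Sum.inl i)) (hfr : ∀ j, f (Sum.inr j) ≤ b)
    (Δ : Matrix (Fin M) (Fin n ⊕ Fin d) ℝ) (X : Matrix (Fin n) (Fin d) ℝ)
    (hfeas : (A + Δ) * Matrix.fromRows X (-1 : Matrix (Fin d) (Fin d) ℝ) = 0) :
    (∑ j, f (Sum.inr j)) ≤ frobSq Δ ∧
    (frobSq Δ ≤ ∑ j, f (Sum.inr j) →
      Matrix.fromRows X (-1 : Matrix (Fin d) (Fin d) ℝ)
        = (V.submatrix id Sum.inr) * ((V.submatrix id Sum.inr)ᵀ * Matrix.fromRows X (-1 : Matrix (Fin d) (Fin d) ℝ))) := by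
  set W := Matrix.fromRows X (-1 : Matrix (Fin d) (Fin d) ℝ) with hW
  have hWtW : Wᵀ * W = Xᵀ * X + 1 := by
    rw [hW, Matrix.transpose_fromRows, Matrix.fromCols_mul_fromRows]
    simp
  have hdet : IsUnit (Wᵀ * W).det := by rw [hWtW]; exact isUnit_det_aux X
  set N := (Wᵀ * W)⁻¹ with hN
  have hNW : N * (Wᵀ * W) = 1 := Matrix.nonsing_inv_mul _ hdet
  have hWN : (Wᵀ * W) * N = 1 := Matrix.mul_nonsing_inv _ hdet
  set P := W * N * Wᵀ with hP
  have hNsym : Nᵀ = N := by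
    rw [hN, Matrix.transpose_nonsing_inv, Matrix.transpose_mul, Matrix.transpose_transpose]
  have hPsym : Pᵀ = P := by
    rw [hP, Matrix.transpose_mul, Matrix.transpose_mul, Matrix.transpose_transpose, hNsym,
      Matrix.mul_assoc]
  have hPW : P * W = W := by
    have e : W * N * Wᵀ * W = W * (N * (Wᵀ * W)) := by simp only [Matrix.mul_assoc]
    rw [hP, e, hNW, Matrix.mul_one]
  have hPidem : P * P = P := by
    have e : W * N * Wᵀ * (W * N * Wᵀ) = (W * N * Wᵀ * W) * (N * Wᵀ) := by
      simp only [Matrix.mul_assoc]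
    rw [hP, e, ← hP, hPW, hP]
    simp only [Matrix.mul_assoc]
  have htrP : Matrix.trace P = (d : ℝ) := by
    rw [hP, Matrix.trace_mul_comm, ← Matrix.mul_assoc, hWN, Matrix.trace_one]
    simp
  have hBP : (A + Δ) * P = 0 := by
    have e : (A + Δ) * (W * N * Wᵀ) = ((A + Δ) * W) * (N * Wᵀ) := by
      simp only [Matrix.mul_assoc]
    rw [hP, e, hfeas, Matrix.zero_mul]
  have hDP : Δ * P = -(A * P) := by
    have h := hBP
    rw [Matrix.add_mul, add_comm] at h
    exact eq_neg_of_add_eq_zero_left h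
  clear_value N P
  have hVVt : V * Vᵀ = 1 := mul_eq_one_comm.mp hV
  set Q := Vᵀ * P * V with hQ
  clear_value Q
  have hQsym : Qᵀ = Q := by
    rw [hQ, Matrix.transpose_mul, Matrix.transpose_mul, Matrix.transpose_transpose, hPsym,
      ← Matrix.mul_assoc]
  have hQidem : Q * Q = Q := by
    rw [hQ]
    calc (Vᵀ * P * V) * (Vᵀ * P * V) = Vᵀ * (P * ((V * Vᵀ) * (P * V))) := by
          simp only [Matrix.mul_assoc]
      _ = Vᵀ * (P * (P * V)) := by rw [hVVt, Matrix.one_mul]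
      _ = Vᵀ * ((P * P) * V) := by simp only [Matrix.mul_assoc]
      _ = Vᵀ * P * V := by rw [hPidem, Matrix.mul_assoc]
  have htrQ : Matrix.trace Q = (d : ℝ) := by
    rw [hQ, Matrix.trace_mul_comm, ← Matrix.mul_assoc, hVVt, Matrix.one_mul, htrP]
  have hQd := fun k => symIdem_diag_eq Q hQsym hQidem k
  have ht0 : ∀ k, 0 ≤ Q k k := fun k => (hQd k) ▸ Finset.sum_nonneg fun _ _ => sq_nonneg _
  have ht1 : ∀ k, Q k k ≤ 1 := by
    intro k
    have h1 : Q k k ^ 2 ≤ ∑ l, Q k l ^ 2 :=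
      Finset.single_le_sum (f := fun l => Q k l ^ 2) (fun _ _ => sq_nonneg _) (Finset.mem_univ k)
    nlinarith [hQd k]
  have htr' : ∑ k, Q k k = (d : ℝ) := by
    simpa [Matrix.trace, Matrix.diag] using htrQ
  have hS : Matrix.trace (Aᵀ * A * P) = ∑ k, f k * Q k k := by
    rw [hA]
    calc Matrix.trace ((V * Matrix.diagonal f * Vᵀ) * P)
        = Matrix.trace ((V * Matrix.diagonal f) * (Vᵀ * P)) := by simp only [Matrix.mul_assoc]
      _ = Matrix.trace ((Vᵀ * P) * (V * Matrix.diagonal f)) := by rw [Matrix.trace_mul_comm]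
      _ = Matrix.trace ((Vᵀ * P * V) * Matrix.diagonal f) := by simp only [Matrix.mul_assoc]
      _ = Matrix.trace (Matrix.diagonal f * Q) := by rw [Matrix.trace_mul_comm, hQ]
      _ = ∑ k, f k * Q k k := by simp [Matrix.trace, Matrix.diag, Matrix.diagonal_mul]
  have h1P : Matrix.trace (Δᵀ * Δ * P) = Matrix.trace (Aᵀ * A * P) := by
    rw [trace_proj Δ P hPsym hPidem, hDP, frobSq_neg, ← trace_proj A P hPsym hPidem]
  have hsub_sym : (1 - P)ᵀ = 1 - P := by
    rw [Matrix.transpose_sub, Matrix.transpose_one, hPsym]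
  have hsub_idem : (1 - P) * (1 - P) = 1 - P := by
    have e : (1 - P) * (1 - P) = 1 - P - P + P * P := by
      rw [Matrix.sub_mul, Matrix.mul_sub, Matrix.mul_sub, Matrix.one_mul, Matrix.one_mul,
        Matrix.mul_one]
      abel
    rw [e, hPidem]
    abel
  have hrest : 0 ≤ Matrix.trace (Δᵀ * Δ * (1 - P)) := by
    rw [trace_proj Δ (1 - P) hsub_sym hsub_idem]; exact frobSq_nonneg _
  have hone : P + (1 - P) = 1 := by abel
  have hsplit : frobSq Δ = Matrix.trace (Δᵀ * Δ * P) + Matrix.trace (Δᵀ * Δ * (1 - P)) := by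
    rw [← Matrix.trace_add, ← Matrix.mul_add, hone, Matrix.mul_one, frobSq_eq_trace]
  set sL := ∑ i, Q (Sum.inl i) (Sum.inl i) with hsL
  set sR := ∑ j, Q (Sum.inr j) (Sum.inr j) with hsR
  have hsplitSum : ∑ k, f k * Q k k
      = (∑ i, f (Sum.inl i) * Q (Sum.inl i) (Sum.inl i))
        + ∑ j, f (Sum.inr j) * Q (Sum.inr j) (Sum.inr j) :=
    Fintype.sum_sum_type _
  have htrsplit : sL + sR = (d : ℝ) := by
    rw [hsL, hsR]
    rw [← Fintype.sum_sum_type (fun k => Q k k)]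
    exact htr'
  have e1 : a * sL ≤ ∑ i, f (Sum.inl i) * Q (Sum.inl i) (Sum.inl i) := by
    rw [hsL, Finset.mul_sum]
    exact Finset.sum_le_sum fun i _ => mul_le_mul_of_nonneg_right (hfl i) (ht0 _)
  have hsum1 : ∑ j : Fin d, (1 - Q (Sum.inr j) (Sum.inr j)) = sL := by
    rw [Finset.sum_sub_distrib, Finset.sum_const, Finset.card_univ, Fintype.card_fin,
      nsmul_eq_mul, mul_one]
    rw [← hsR]
    linarith [htrsplit]
  have e2 : (∑ j, f (Sum.inr j)) - (∑ j, f (Sum.inr j) * Q (Sum.inr j) (Sum.inr j))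
      ≤ b * sL := by
    rw [← hsum1, Finset.mul_sum, ← Finset.sum_sub_distrib]
    refine Finset.sum_le_sum fun j _ => ?_
    have e : f (Sum.inr j) - f (Sum.inr j) * Q (Sum.inr j) (Sum.inr j)
        = f (Sum.inr j) * (1 - Q (Sum.inr j) (Sum.inr j)) := by ring
    rw [e]
    exact mul_le_mul_of_nonneg_right (hfr j) (by linarith [ht1 (Sum.inr j)])
  have hsL0 : 0 ≤ sL := Finset.sum_nonneg fun i _ => ht0 _
  have habsL : (a - b) * sL = a * sL - b * sL := by ring
  have hmain : (∑ j, f (Sum.inr j)) + (a - b) * sL ≤ frobSq Δ := by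
    rw [hsplit, h1P, hS, hsplitSum]
    linarith only [e1, e2, hrest, habsL]
  constructor
  · have h6 : 0 ≤ (a - b) * sL := mul_nonneg (by linarith only [hab]) hsL0
    linarith only [hmain, h6]
  · intro hle
    have h5 : (a - b) * sL ≤ 0 := by linarith only [hmain, hle]
    have hsLz : sL = 0 := by
      refine le_antisymm (le_of_not_gt fun hpos => absurd h5 (not_le.mpr ?_)) hsL0
      exact mul_pos (by linarith only [hab]) hpos
    have ht_inl : ∀ i, Q (Sum.inl i) (Sum.inl i) = 0 := by
      have h7 := (Finset.sum_eq_zero_iff_of_nonneg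
        (fun i _ => ht0 (Sum.inl i))).mp (by rw [← hsL]; exact hsLz)
      exact fun i => h7 i (Finset.mem_univ i)
    have hrow : ∀ (i : Fin n) l, Q (Sum.inl i) l = 0 := by
      intro i l
      have h := (hQd (Sum.inl i)).symm
      rw [ht_inl i] at h
      have h8 := (Finset.sum_eq_zero_iff_of_nonneg
        (fun l _ => sq_nonneg (Q (Sum.inl i) l))).mp h
      have := h8 l (Finset.mem_univ l)
      exact pow_eq_zero_iff (two_ne_zero) |>.mp this
    have hdiagr : ∀ j, Q (Sum.inr j) (Sum.inr j) = 1 := by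
      intro j
      have h9 := (Finset.sum_eq_zero_iff_of_nonneg
        (fun j _ => by linarith [ht1 (Sum.inr j)] :
          ∀ j ∈ Finset.univ, 0 ≤ 1 - Q (Sum.inr j) (Sum.inr j))).mp
        (by rw [hsum1]; exact hsLz)
      have := h9 j (Finset.mem_univ j)
      linarith
    have hoff : ∀ (j : Fin d) l, l ≠ Sum.inr j → Q (Sum.inr j) l = 0 := by
      intro j l hne
      have h := hQd (Sum.inr j)
      rw [hdiagr j] at h
      have hsp : ∑ l, Q (Sum.inr j) l ^ 2
          = Q (Sum.inr j) (Sum.inr j) ^ 2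
            + ∑ l ∈ Finset.univ.erase (Sum.inr j), Q (Sum.inr j) l ^ 2 :=
        (Finset.add_sum_erase _ _ (Finset.mem_univ _)).symm
      rw [hsp, hdiagr j] at h
      have h10 : ∑ l ∈ Finset.univ.erase (Sum.inr j), Q (Sum.inr j) l ^ 2 = 0 := by
        linarith only [h]
      have h11 := (Finset.sum_eq_zero_iff_of_nonneg
        (fun l _ => sq_nonneg (Q (Sum.inr j) l))).mp h10
      have := h11 l (Finset.mem_erase.mpr ⟨hne, Finset.mem_univ l⟩)
      exact pow_eq_zero_iff (two_ne_zero) |>.mp this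
    have hQeq : Q = Matrix.diagonal (Sum.elim (fun _ => (0:ℝ)) fun _ => 1) := by
      ext k l
      rcases k with i | j
      · simp [hrow i l, Matrix.diagonal_apply]
      · rcases l with i' | j'
        · rw [hoff j _ (by simp), Matrix.diagonal_apply]
          simp
        · by_cases h : (j : Fin d) = j'
          · subst h
            rw [hdiagr j, Matrix.diagonal_apply]
            simp
          · rw [hoff j _ (fun hc => h (Sum.inr.inj hc).symm), Matrix.diagonal_apply]
            simp [h]
    have hPeq : P = (V.submatrix id Sum.inr) * (V.submatrix id Sum.inr)ᵀ := by
      have hvd := Vdiag_eq V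
      rw [← hQeq] at hvd
      rw [← hvd, hQ]
      calc P = (V * Vᵀ) * P * (V * Vᵀ) := by rw [hVVt, Matrix.one_mul, Matrix.mul_one]
        _ = V * (Vᵀ * P * V) * Vᵀ := by simp only [Matrix.mul_assoc]
    conv_lhs => rw [← hPW]
    rw [hPeq, Matrix.mul_assoc]

lemma frob_eq_sqrt {α β : Type*} [Fintype α] [Fintype β] (A : Matrix α β ℝ) :
    frob A = Real.sqrt (frobSq A) := rfl

/-- given an SVD `[C, D] = U Σ Vᵀ` with positive decreasing singular
values, the gap condition `σ_n > σ_{n+1}` and `V₂₂` invertible, the real TLS solution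
exists, is unique, and is given by `X = −V₁₂V₂₂⁻¹`. -/
theorem tls_solution {M n d : ℕ} (hn : 0 < n) (hd : 0 < d) (hM : n + d ≤ M)
    (C : Matrix (Fin M) (Fin n) ℝ) (D : Matrix (Fin M) (Fin d) ℝ)
    (U : Matrix (Fin M) (Fin M) ℝ) (hU : Uᵀ * U = 1)
    (V₁₁ : Matrix (Fin n) (Fin n) ℝ) (V₁₂ : Matrix (Fin n) (Fin d) ℝ)
    (V₂₁ : Matrix (Fin d) (Fin n) ℝ) (V₂₂ : Matrix (Fin d) (Fin d) ℝ)
    (hV : (fromBlocks V₁₁ V₁₂ V₂₁ V₂₂)ᵀ * fromBlocks V₁₁ V₁₂ V₂₁ V₂₂ = 1)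
    (σ : Fin (n + d) → ℝ) (hσpos : ∀ i, 0 < σ i) (hσdec : Antitone σ)
    (hSVD : fromCols C D =
      U * (Matrix.of fun (i : Fin M) (j : Fin n ⊕ Fin d) =>
            if (i : ℕ) = ((finSumFinEquiv j : Fin (n + d)) : ℕ)
            then σ (finSumFinEquiv j) else 0) *
        (fromBlocks V₁₁ V₁₂ V₂₁ V₂₂)ᵀ)
    (hgap : σ ⟨n, by omega⟩ < σ ⟨n - 1, by omega⟩)
    (hV₂₂ : IsUnit V₂₂.det) :
    IsTLSSol C D (-(V₁₂ * V₂₂⁻¹)) ∧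
    ∀ X : Matrix (Fin n) (Fin d) ℝ, IsTLSSol C D X → X = -(V₁₂ * V₂₂⁻¹) := by
  have hn1 : n - 1 < n + d := by omega
  have hnn : n < n + d := by omega
  -- block facts proved before abbreviating
  have hV₂sub : (Matrix.fromBlocks V₁₁ V₁₂ V₂₁ V₂₂).submatrix id Sum.inr
      = Matrix.fromRows V₁₂ V₂₂ := by
    ext i j
    cases i <;> rfl
  have hone22 : Matrix.toBlocks₂₂ (1 : Matrix (Fin n ⊕ Fin d) (Fin n ⊕ Fin d) ℝ) = 1 := by
    ext i j
    simp [Matrix.toBlocks₂₂, Matrix.one_apply, Sum.inr.injEq]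
  have hV₂tV₂ : (Matrix.fromRows V₁₂ V₂₂)ᵀ * Matrix.fromRows V₁₂ V₂₂ = 1 := by
    have h := congrArg Matrix.toBlocks₂₂ hV
    rw [Matrix.fromBlocks_transpose, Matrix.fromBlocks_multiply, hone22] at h
    rw [Matrix.transpose_fromRows, Matrix.fromCols_mul_fromRows]
    simpa [Matrix.toBlocks_fromBlocks₂₂] using h
  set A := fromCols C D with hA
  set V := fromBlocks V₁₁ V₁₂ V₂₁ V₂₂ with hVdef
  set Sm := (Matrix.of fun (i : Fin M) (j : Fin n ⊕ Fin d) =>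
            if (i : ℕ) = ((finSumFinEquiv j : Fin (n + d)) : ℕ)
            then σ (finSumFinEquiv j) else 0) with hSm
  set V₂ := Matrix.fromRows V₁₂ V₂₂ with hV₂
  set f : Fin n ⊕ Fin d → ℝ := fun j => σ (finSumFinEquiv j) ^ 2 with hf
  have hSr0 : (0:ℝ) ≤ ∑ j, f (Sum.inr j) :=
    Finset.sum_nonneg fun j _ => by simp only [hf]; positivity
  have hdiagS : Smᵀ * Sm = Matrix.diagonal f := by
    ext j k
    rw [Matrix.mul_apply, Matrix.diagonal_apply]
    have hjM : ((finSumFinEquiv j : Fin (n + d)) : ℕ) < M :=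
      lt_of_lt_of_le (Fin.is_lt _) hM
    rw [Finset.sum_eq_single (⟨((finSumFinEquiv j : Fin (n + d)) : ℕ), hjM⟩ : Fin M)]
    · simp only [hSm, Matrix.transpose_apply, Matrix.of_apply]
      by_cases h : j = k
      · subst h
        simp [hf, pow_two]
      · have hne : ((finSumFinEquiv j : Fin (n + d)) : ℕ)
            ≠ ((finSumFinEquiv k : Fin (n + d)) : ℕ) := by
          intro hc
          exact h (finSumFinEquiv.injective (Fin.val_injective hc))
        simp [h, hne]
    · intro i _ hi
      have hne : (i : ℕ) ≠ ((finSumFinEquiv j : Fin (n + d)) : ℕ) := by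
        intro hc
        exact hi (Fin.ext hc)
      simp [hSm, Matrix.transpose_apply, Matrix.of_apply, hne]
    · intro h
      exact absurd (Finset.mem_univ _) h
  have hAA : Aᵀ * A = V * Matrix.diagonal f * Vᵀ := by
    rw [hSVD]
    calc (U * Sm * Vᵀ)ᵀ * (U * Sm * Vᵀ)
        = V * (Smᵀ * (Uᵀ * (U * (Sm * Vᵀ)))) := by
          simp only [Matrix.transpose_mul, Matrix.transpose_transpose, Matrix.mul_assoc]
      _ = V * (Smᵀ * ((Uᵀ * U) * (Sm * Vᵀ))) := by simp only [Matrix.mul_assoc]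
      _ = V * (Smᵀ * (Sm * Vᵀ)) := by rw [hU, Matrix.one_mul]
      _ = V * (Smᵀ * Sm) * Vᵀ := by simp only [Matrix.mul_assoc]
      _ = V * Matrix.diagonal f * Vᵀ := by rw [hdiagS]
  have hab : (σ ⟨n, hnn⟩ ^ 2) < σ ⟨n - 1, hn1⟩ ^ 2 := by
    have hgap' : σ ⟨n, hnn⟩ < σ ⟨n - 1, hn1⟩ := hgap
    exact pow_lt_pow_left₀ hgap' (hσpos _).le two_ne_zero
  have hfl : ∀ i : Fin n, σ ⟨n - 1, hn1⟩ ^ 2 ≤ f (Sum.inl i) := by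
    intro i
    have hi := i.isLt
    have h1 : σ ⟨n - 1, hn1⟩ ≤ σ (finSumFinEquiv (Sum.inl i)) := by
      apply hσdec
      rw [Fin.le_def]
      simp only [finSumFinEquiv_apply_left, Fin.coe_castAdd]
      omega
    simp only [hf]
    exact pow_le_pow_left₀ (hσpos _).le h1 2
  have hfr : ∀ j : Fin d, f (Sum.inr j) ≤ σ ⟨n, hnn⟩ ^ 2 := by
    intro j
    have h1 : σ (finSumFinEquiv (Sum.inr j)) ≤ σ ⟨n, hnn⟩ := by
      apply hσdec
      rw [Fin.le_def]
      simp only [finSumFinEquiv_apply_right, Fin.coe_natAdd]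
      omega
    simp only [hf]
    exact pow_le_pow_left₀ (hσpos _).le h1 2
  have hkey := fun (Δ : Matrix (Fin M) (Fin n ⊕ Fin d) ℝ) (Y : Matrix (Fin n) (Fin d) ℝ)
      (hfe : (A + Δ) * Matrix.fromRows Y (-1 : Matrix (Fin d) (Fin d) ℝ) = 0) =>
    tls_key A V hV f hAA _ _ hab hfl hfr Δ Y hfe
  -- constraint translation
  have hconstr : ∀ (E : Matrix (Fin M) (Fin n) ℝ) (G : Matrix (Fin M) (Fin d) ℝ)
      (Y : Matrix (Fin n) (Fin d) ℝ), ((C + E) * Y = D + G) ↔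
      ((A + Matrix.fromCols E G) * Matrix.fromRows Y (-1 : Matrix (Fin d) (Fin d) ℝ) = 0) := by
    intro E G Y
    have hadd : A + Matrix.fromCols E G = Matrix.fromCols (C + E) (D + G) := by
      rw [hA]
      ext i j
      cases j <;> simp [Matrix.fromCols]
    rw [hadd, Matrix.fromCols_mul_fromRows, Matrix.mul_neg, Matrix.mul_one,
      add_neg_eq_zero]
  -- the optimal perturbation
  set Δ₀ := -(A * (V₂ * V₂ᵀ)) with hΔ₀
  have hW₀ : Matrix.fromRows (-(V₁₂ * V₂₂⁻¹)) (-1 : Matrix (Fin d) (Fin d) ℝ)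
      = V₂ * -(V₂₂⁻¹) := by
    rw [hV₂, Matrix.fromRows_mul, Matrix.mul_neg, Matrix.mul_neg,
      Matrix.mul_nonsing_inv _ hV₂₂]
  have hfeas₀ : (A + Δ₀) * Matrix.fromRows (-(V₁₂ * V₂₂⁻¹))
      (-1 : Matrix (Fin d) (Fin d) ℝ) = 0 := by
    rw [hW₀, Matrix.add_mul, hΔ₀, Matrix.neg_mul]
    have e : A * (V₂ * V₂ᵀ) * (V₂ * -(V₂₂⁻¹)) = A * (V₂ * -(V₂₂⁻¹)) := by
      calc A * (V₂ * V₂ᵀ) * (V₂ * -(V₂₂⁻¹))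
          = A * (V₂ * ((V₂ᵀ * V₂) * -(V₂₂⁻¹))) := by simp only [Matrix.mul_assoc]
        _ = A * (V₂ * -(V₂₂⁻¹)) := by rw [hV₂tV₂, Matrix.one_mul]
    rw [e]
    abel
  have hP₀sym : (V₂ * V₂ᵀ)ᵀ = V₂ * V₂ᵀ := by
    rw [Matrix.transpose_mul, Matrix.transpose_transpose]
  have hP₀idem : (V₂ * V₂ᵀ) * (V₂ * V₂ᵀ) = V₂ * V₂ᵀ := by
    calc (V₂ * V₂ᵀ) * (V₂ * V₂ᵀ) = V₂ * ((V₂ᵀ * V₂) * V₂ᵀ) := by simp only [Matrix.mul_assoc]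
      _ = V₂ * V₂ᵀ := by rw [hV₂tV₂, Matrix.one_mul]
  have hfrobΔ₀ : frobSq Δ₀ = ∑ j, f (Sum.inr j) := by
    rw [hΔ₀, frobSq_neg, ← trace_proj A (V₂ * V₂ᵀ) hP₀sym hP₀idem]
    have hvd : V₂ * V₂ᵀ
        = V * Matrix.diagonal (Sum.elim (fun _ => (0:ℝ)) (fun _ => 1)) * Vᵀ := by
      rw [Vdiag_eq V, hV₂sub]
    rw [hAA, hvd]
    have e1 : (V * Matrix.diagonal f * Vᵀ)
          * (V * Matrix.diagonal (Sum.elim (fun _ => (0:ℝ)) (fun _ => 1)) * Vᵀ)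
        = V * (Matrix.diagonal f
            * Matrix.diagonal (Sum.elim (fun _ => (0:ℝ)) (fun _ => 1))) * Vᵀ := by
      calc (V * Matrix.diagonal f * Vᵀ)
            * (V * Matrix.diagonal (Sum.elim (fun _ => (0:ℝ)) (fun _ => 1)) * Vᵀ)
          = V * (Matrix.diagonal f * ((Vᵀ * V)
              * (Matrix.diagonal (Sum.elim (fun _ => (0:ℝ)) (fun _ => 1)) * Vᵀ))) := by
            simp only [Matrix.mul_assoc]
        _ = V * (Matrix.diagonal f
              * (Matrix.diagonal (Sum.elim (fun _ => (0:ℝ)) (fun _ => 1)) * Vᵀ)) := by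
            rw [hV, Matrix.one_mul]
        _ = V * (Matrix.diagonal f
              * Matrix.diagonal (Sum.elim (fun _ => (0:ℝ)) (fun _ => 1))) * Vᵀ := by
            simp only [Matrix.mul_assoc]
    rw [e1, Matrix.trace_mul_comm, ← Matrix.mul_assoc, hV, Matrix.one_mul,
      Matrix.diagonal_mul_diagonal, Matrix.trace_diagonal]
    rw [Fintype.sum_sum_type]
    simp
  set E₀ := Δ₀.toCols₁ with hE₀
  set G₀ := Δ₀.toCols₂ with hG₀
  have hE₀G₀ : Matrix.fromCols E₀ G₀ = Δ₀ := Matrix.fromCols_toCols Δ₀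
  have hc₀ : (C + E₀) * (-(V₁₂ * V₂₂⁻¹)) = D + G₀ := by
    rw [hconstr, hE₀G₀]
    exact hfeas₀
  have hmin₀ : ∀ (E' : Matrix (Fin M) (Fin n) ℝ) (G' : Matrix (Fin M) (Fin d) ℝ)
      (X' : Matrix (Fin n) (Fin d) ℝ), (C + E') * X' = D + G' →
      frob (fromCols E₀ G₀) ≤ frob (fromCols E' G') := by
    intro E' G' X' hfe
    have h1 := (hkey (Matrix.fromCols E' G') X' ((hconstr E' G' X').mp hfe)).1
    rw [frob_eq_sqrt, frob_eq_sqrt, hE₀G₀, hfrobΔ₀]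
    exact Real.sqrt_le_sqrt h1
  constructor
  · exact ⟨E₀, G₀, hc₀, hmin₀⟩
  · intro X hX
    obtain ⟨E, G, hfe, hmin⟩ := hX
    have hfeas' := (hconstr E G X).mp hfe
    have hle := hmin E₀ G₀ (-(V₁₂ * V₂₂⁻¹)) hc₀
    rw [frob_eq_sqrt, frob_eq_sqrt, hE₀G₀, hfrobΔ₀] at hle
    have hle2 : frobSq (Matrix.fromCols E G) ≤ ∑ j, f (Sum.inr j) :=
      (Real.sqrt_le_sqrt_iff hSr0).mp hle
    have hW := (hkey (Matrix.fromCols E G) X hfeas').2 hle2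
    rw [hV₂sub, hV₂, Matrix.fromRows_mul] at hW
    have hXb : X = V₁₂ * ((Matrix.fromRows V₁₂ V₂₂)ᵀ
        * Matrix.fromRows X (-1 : Matrix (Fin d) (Fin d) ℝ)) := by
      have h := congrArg Matrix.toRows₁ hW
      simpa [Matrix.toRows₁_fromRows] using h
    have hIb : (-1 : Matrix (Fin d) (Fin d) ℝ) = V₂₂ * ((Matrix.fromRows V₁₂ V₂₂)ᵀ
        * Matrix.fromRows X (-1 : Matrix (Fin d) (Fin d) ℝ)) := by
      have h := congrArg Matrix.toRows₂ hW
      simpa [Matrix.toRows₂_fromRows] using h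
    have hK' : (Matrix.fromRows V₁₂ V₂₂)ᵀ
        * Matrix.fromRows X (-1 : Matrix (Fin d) (Fin d) ℝ) = -(V₂₂⁻¹) := by
      have h4 := congrArg (fun Z => V₂₂⁻¹ * Z) hIb
      rw [← Matrix.mul_assoc, Matrix.nonsing_inv_mul _ hV₂₂, Matrix.one_mul] at h4
      rw [← h4, Matrix.mul_neg, Matrix.mul_one]
    rw [hXb, hK', Matrix.mul_neg]
end
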